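/- Let H ∈ (1/2,1), H' = (H+1)/2, and fix integers 0 ≤ q_1, r_1, q_2, r_2 ≤ ℓ. For nonnegative integers i, j ≥ ℓ with i ≠ j define A_N(i,j) = ∫_{[0,1]^4} |u-u'+i-j-q_1+q_2|^{2H'-2} |v-v'+i-j-r_1+r_2|^{2H'-2} du dv du' dv'. Then (1/(N-ℓ)^2) ∑_{i,j=ℓ, i≠j}^{N-1} A_N(i,j) · N^{2-2H} → 1/(H(2H-1)) as N → ∞. -/

import Mathlib

open Finset Filter intervalIntegral MeasureTheory Real Set Topology

noncomputable def phiF (r x : ℝ) : ℝ := ((max x 0) ^ (r+1) - (max (-x) 0) ^ (r+1)) / (r+1)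
noncomputable def psiF (r x : ℝ) : ℝ := |x| ^ (r+2) / ((r+1)*(r+2))
noncomputable def Gf (r c : ℝ) : ℝ := psiF r (c+1) - 2 * psiF r c + psiF r (c-1)

lemma phiF_cont {r : ℝ} (hr : -1 < r) : Continuous (phiF r) := by
  have h1 : Continuous fun x : ℝ => x ^ (r+1) :=
    continuous_iff_continuousAt.2 fun x => Real.continuousAt_rpow_const x _ (Or.inr (by linarith))
  unfold phiF
  exact ((h1.comp (continuous_id.max continuous_const)).sub
    (h1.comp (continuous_neg.max continuous_const))).div_const _

lemma intervalIntegrable_abs_rpow {r : ℝ} (hr : -1 < r) (a b : ℝ) :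
    IntervalIntegrable (fun t : ℝ => |t| ^ r) volume a b := by
  suffices h : ∀ c : ℝ, 0 ≤ c → IntervalIntegrable (fun t : ℝ => |t| ^ r) volume 0 c by
    have h' : ∀ c : ℝ, IntervalIntegrable (fun t : ℝ => |t| ^ r) volume 0 c := by
      intro c
      rcases le_total 0 c with hc | hc
      · exact h c hc
      · rw [IntervalIntegrable.iff_comp_neg]
        simp only [abs_neg, neg_zero]
        exact h (-c) (by linarith)
    exact ((h' a).symm).trans (h' b)
  intro c hc
  rw [intervalIntegrable_iff, uIoc_of_le hc]
  have := (intervalIntegrable_rpow' (a := 0) (b := c) hr)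
  rw [intervalIntegrable_iff, uIoc_of_le hc] at this
  refine this.congr_fun ?_ measurableSet_Ioc
  intro x hx
  show x ^ r = |x| ^ r
  rw [abs_of_pos hx.1]

lemma integral_abs_rpow_zero {r : ℝ} (hr : -1 < r) (x : ℝ) :
    ∫ t in (0:ℝ)..x, |t| ^ r = phiF r x := by
  have key : ∀ x : ℝ, 0 ≤ x → ∫ t in (0:ℝ)..x, |t| ^ r = phiF r x := by
    intro x hx
    have : ∫ t in (0:ℝ)..x, |t| ^ r = ∫ t in (0:ℝ)..x, t ^ r := by
      refine intervalIntegral.integral_congr fun t ht => ?_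
      rw [uIcc_of_le hx] at ht
      rw [abs_of_nonneg ht.1]
    rw [this, integral_rpow (Or.inl hr)]
    rw [phiF, max_eq_left hx, max_eq_right (by linarith : -x ≤ 0),
      Real.zero_rpow (by linarith : r + 1 ≠ 0)]
  rcases le_total 0 x with hx | hx
  · exact key x hx
  · have : ∫ t in (0:ℝ)..x, |t| ^ r = ∫ t in (-x:ℝ)..(-0:ℝ), |t| ^ r := by
      rw [← intervalIntegral.integral_comp_neg (fun t => |t| ^ r)]
      simp
    rw [this, neg_zero, intervalIntegral.integral_symm 0 (-x), key (-x) (by linarith)]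
    simp only [phiF, neg_neg, max_eq_left (by linarith : (0:ℝ) ≤ -x),
      max_eq_right hx, Real.zero_rpow (by linarith : r + 1 ≠ 0)]
    ring

lemma integral_abs_rpow {r : ℝ} (hr : -1 < r) (a b : ℝ) :
    ∫ t in a..b, |t| ^ r = phiF r b - phiF r a := by
  rw [← integral_abs_rpow_zero hr b, ← integral_abs_rpow_zero hr a]
  exact (intervalIntegral.integral_interval_sub_left
    (intervalIntegrable_abs_rpow hr 0 b) (intervalIntegrable_abs_rpow hr 0 a)).symm

lemma hasDerivAt_psiF {r : ℝ} (hr : -1 < r) (hr0 : r < 0) (x : ℝ) :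
    HasDerivAt (psiF r) (phiF r x) x := by
  have h41 : r + 1 ≠ 0 := by linarith
  have h42 : r + 2 ≠ 0 := by linarith
  rcases lt_trichotomy x 0 with hx | hx | hx
  · have h1 : HasDerivAt (fun y : ℝ => (-y) ^ (r+2) / ((r+1)*(r+2)))
        (-(-x) ^ (r+1) / (r+1)) x := by
      have h2 := (Real.hasDerivAt_rpow_const (x := -x) (p := r+2)
        (Or.inl (neg_ne_zero.mpr hx.ne))).comp x (hasDerivAt_neg x)
      have h3 := h2.div_const ((r+1)*(r+2))
      refine h3.congr_deriv ?_
      rw [show r + 2 - 1 = r + 1 by ring]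
      field_simp
    have heq : psiF r =ᶠ[nhds x] fun y : ℝ => (-y) ^ (r+2) / ((r+1)*(r+2)) := by
      filter_upwards [Iio_mem_nhds hx] with y hy
      rw [psiF, abs_of_neg hy]
    refine (h1.congr_of_eventuallyEq heq).congr_deriv ?_
    rw [phiF, max_eq_right hx.le, max_eq_left (by linarith : (0:ℝ) ≤ -x),
      Real.zero_rpow h41]
    ring
  · subst hx
    have h0 : phiF r 0 = 0 := by
      simp [phiF, Real.zero_rpow h41]
    have hpsi0 : psiF r 0 = 0 := by
      simp [psiF, Real.zero_rpow h42]
    rw [h0, hasDerivAt_iff_tendsto_slope]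
    have hb : ∀ᶠ y in nhdsWithin (0:ℝ) {(0:ℝ)}ᶜ,
        ‖slope (psiF r) 0 y‖ ≤ |y| ^ (r+1) / |(r+1)*(r+2)| := by
      filter_upwards [self_mem_nhdsWithin] with y hy
      have hy0 : y ≠ 0 := hy
      have hs : slope (psiF r) 0 y = psiF r y / y := by
        rw [slope_def_field, hpsi0, sub_zero, sub_zero]
      have : ‖slope (psiF r) 0 y‖ = |y| ^ (r+1) / |(r+1)*(r+2)| := by
        rw [hs, psiF, norm_div, Real.norm_eq_abs, Real.norm_eq_abs, abs_div,
          abs_of_nonneg (Real.rpow_nonneg (abs_nonneg y) _),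
          show r+2 = (r+1)+1 by ring, Real.rpow_add_one (abs_ne_zero.2 hy0),
          div_div]
        rw [mul_div_mul_right _ _ (abs_ne_zero.2 hy0)]
      exact this.le
    have hg : Tendsto (fun y : ℝ => |y| ^ (r+1) / |(r+1)*(r+2)|)
        (nhdsWithin (0:ℝ) {(0:ℝ)}ᶜ) (nhds 0) := by
      have hcont : ContinuousAt (fun y : ℝ => |y| ^ (r+1) / |(r+1)*(r+2)|) 0 := by
        have hc1 := Real.continuousAt_rpow_const (|(0:ℝ)|) (r+1) (Or.inr (by linarith))
        exact (hc1.comp continuous_abs.continuousAt).div_const _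
      have := hcont.tendsto
      have h00 : |(0:ℝ)| ^ (r+1) / |(r+1)*(r+2)| = 0 := by
        simp [Real.zero_rpow h41]
      rw [h00] at this
      exact this.mono_left nhdsWithin_le_nhds
    exact squeeze_zero_norm' hb hg
  · have h1 : HasDerivAt (fun y : ℝ => y ^ (r+2) / ((r+1)*(r+2)))
        (x ^ (r+1) / (r+1)) x := by
      have h2 := (Real.hasDerivAt_rpow_const (x := x) (p := r+2)
        (Or.inl hx.ne')).div_const ((r+1)*(r+2))
      refine h2.congr_deriv ?_
      rw [show r + 2 - 1 = r + 1 by ring]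
      field_simp
    have heq : psiF r =ᶠ[nhds x] fun y : ℝ => y ^ (r+2) / ((r+1)*(r+2)) := by
      filter_upwards [Ioi_mem_nhds hx] with y hy
      rw [psiF, abs_of_pos hy]
    refine (h1.congr_of_eventuallyEq heq).congr_deriv ?_
    rw [phiF, max_eq_left hx.le, max_eq_right (by linarith : -x ≤ 0),
      Real.zero_rpow h41]
    ring

lemma integral_phiF {r : ℝ} (hr : -1 < r) (hr0 : r < 0) (a b : ℝ) :
    ∫ t in a..b, phiF r t = psiF r b - psiF r a :=
  intervalIntegral.integral_eq_sub_of_hasDerivAt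
    (fun x _ => hasDerivAt_psiF hr hr0 x) ((phiF_cont hr).intervalIntegrable a b)

lemma inner_integral_eq {r : ℝ} (hr : -1 < r) (c u : ℝ) :
    ∫ v in (0:ℝ)..1, |u - v + c| ^ r = phiF r (u+c) - phiF r (u+c-1) := by
  have h1 : ∀ v : ℝ, |u - v + c| ^ r = (fun t : ℝ => |t| ^ r) ((u+c) - v) := by
    intro v; rw [show u - v + c = (u+c) - v by ring]
  simp_rw [h1]
  rw [intervalIntegral.integral_comp_sub_left (fun t : ℝ => |t| ^ r) (u+c)]
  rw [integral_abs_rpow hr]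
  norm_num

lemma integral_phiF_diff {r : ℝ} (hr : -1 < r) (hr0 : r < 0) (d : ℝ) :
    ∫ u in (0:ℝ)..1, (phiF r (u+d) - phiF r (u+d-1)) = Gf r d := by
  have hint : ∀ e : ℝ, IntervalIntegrable (fun u : ℝ => phiF r (u+e)) volume 0 1 :=
    fun e => (((phiF_cont hr).comp (continuous_id.add continuous_const)).intervalIntegrable 0 1)
  have h2 : ∀ e : ℝ, ∫ u in (0:ℝ)..1, phiF r (u+e) = psiF r (1+e) - psiF r e := by
    intro e
    rw [intervalIntegral.integral_comp_add_right (fun t => phiF r t) e]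
    rw [integral_phiF hr hr0]
    norm_num
  have h3 : ∀ u : ℝ, phiF r (u+d) - phiF r (u+d-1) =
      (fun w => phiF r (w+d)) u - (fun w => phiF r (w+(d-1))) u := by
    intro u; simp only []; ring_nf
  simp_rw [h3]
  rw [intervalIntegral.integral_sub (hint d) (hint (d-1)), h2 d, h2 (d-1)]
  rw [Gf]
  ring_nf

lemma Gf_integral {r : ℝ} (hr : -1 < r) (hr0 : r < 0) (c : ℝ) :
    ∫ u in (0:ℝ)..1, ∫ v in (0:ℝ)..1, |u - v + c| ^ r = Gf r c := by
  simp_rw [inner_integral_eq hr c]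
  exact integral_phiF_diff hr hr0 c

lemma quad_eq {r : ℝ} (hr : -1 < r) (hr0 : r < 0) (c d : ℝ) :
    (∫ u in (0:ℝ)..1, ∫ v in (0:ℝ)..1, ∫ u' in (0:ℝ)..1, ∫ v' in (0:ℝ)..1,
      |u - u' + c| ^ r * |v - v' + d| ^ r) = Gf r c * Gf r d := by
  simp_rw [intervalIntegral.integral_const_mul, inner_integral_eq hr d,
    intervalIntegral.integral_mul_const, inner_integral_eq hr c,
    intervalIntegral.integral_const_mul, integral_phiF_diff hr hr0 d,
    intervalIntegral.integral_mul_const, integral_phiF_diff hr hr0 c]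

lemma Gf_nonneg {r : ℝ} (hr : -1 < r) (hr0 : r < 0) (c : ℝ) : 0 ≤ Gf r c := by
  rw [← Gf_integral hr hr0 c]
  apply intervalIntegral.integral_nonneg (by norm_num)
  intro u _
  apply intervalIntegral.integral_nonneg (by norm_num)
  intro v _
  exact Real.rpow_nonneg (abs_nonneg _) _

lemma Gf_even (r c : ℝ) : Gf r (-c) = Gf r c := by
  unfold Gf psiF
  rw [show -c+1 = -(c-1) by ring, show -c-1 = -(c+1) by ring, abs_neg, abs_neg, abs_neg]
  ring

lemma cont_on_base {r c : ℝ} (u : ℝ) (h : ∀ v ∈ Icc (0:ℝ) 1, u - v + c ≠ 0) :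
    ContinuousOn (fun v : ℝ => |u - v + c| ^ r) (Icc (0:ℝ) 1) := by
  apply ContinuousOn.rpow_const
  · exact (((continuous_const.sub continuous_id).add continuous_const).abs).continuousOn
  · intro v hv
    exact Or.inl (abs_ne_zero.2 (h v hv))

lemma Gf_le {r : ℝ} (hr : -1 < r) (hr0 : r < 0) {c : ℝ} (hc : 2 ≤ c) :
    Gf r c ≤ (c-1) ^ r := by
  rw [← Gf_integral hr hr0 c]
  have key : ∀ u ∈ Icc (0:ℝ) 1, (∫ v in (0:ℝ)..1, |u - v + c| ^ r) ≤ (c-1) ^ r := by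
    intro u hu
    have h1 : ∀ v ∈ Icc (0:ℝ) 1, |u - v + c| ^ r ≤ (c-1) ^ r := by
      intro v hv
      rw [abs_of_pos (by nlinarith [hu.1, hu.2, hv.1, hv.2] : (0:ℝ) < u - v + c)]
      exact Real.rpow_le_rpow_of_nonpos (by linarith) (by nlinarith [hu.1, hv.2]) hr0.le
    calc (∫ v in (0:ℝ)..1, |u - v + c| ^ r) ≤ ∫ _ in (0:ℝ)..1, (c-1) ^ r := by
          apply intervalIntegral.integral_mono_on (by norm_num)
          · refine (cont_on_base u fun v hv => ?_).intervalIntegrable_of_Icc (by norm_num)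
            nlinarith [hu.1, hu.2, hv.1, hv.2]
          · exact intervalIntegrable_const
          · exact h1
      _ = (c-1) ^ r := by simp
  calc (∫ u in (0:ℝ)..1, ∫ v in (0:ℝ)..1, |u - v + c| ^ r)
      ≤ ∫ _ in (0:ℝ)..1, (c-1) ^ r := by
        apply intervalIntegral.integral_mono_on (by norm_num)
        · have : Continuous fun u : ℝ => phiF r (u+c) - phiF r (u+c-1) := by
            exact ((phiF_cont hr).comp (continuous_id.add continuous_const)).sub
              ((phiF_cont hr).comp ((continuous_id.add continuous_const).sub continuous_const))
          simp_rw [inner_integral_eq hr c]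
          exact (this.congr (by intro x; ring_nf)).intervalIntegrable 0 1
        · exact intervalIntegrable_const
        · exact key
    _ = (c-1) ^ r := by simp

lemma Gf_ge {r : ℝ} (hr : -1 < r) (hr0 : r < 0) {c : ℝ} (hc : 2 ≤ c) :
    (c+1) ^ r ≤ Gf r c := by
  rw [← Gf_integral hr hr0 c]
  have key : ∀ u ∈ Icc (0:ℝ) 1, (c+1) ^ r ≤ ∫ v in (0:ℝ)..1, |u - v + c| ^ r := by
    intro u hu
    have h1 : ∀ v ∈ Icc (0:ℝ) 1, (c+1) ^ r ≤ |u - v + c| ^ r := by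
      intro v hv
      rw [abs_of_pos (by nlinarith [hu.1, hu.2, hv.1, hv.2] : (0:ℝ) < u - v + c)]
      exact Real.rpow_le_rpow_of_nonpos
        (by nlinarith [hu.1, hu.2, hv.1, hv.2]) (by nlinarith [hu.2, hv.1]) hr0.le
    calc ((c+1) ^ r : ℝ) = ∫ _ in (0:ℝ)..1, (c+1) ^ r := by simp
      _ ≤ ∫ v in (0:ℝ)..1, |u - v + c| ^ r := by
          apply intervalIntegral.integral_mono_on (by norm_num)
          · exact intervalIntegrable_const
          · refine (cont_on_base u fun v hv => ?_).intervalIntegrable_of_Icc (by norm_num)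
            nlinarith [hu.1, hu.2, hv.1, hv.2]
          · exact h1
  calc ((c+1) ^ r : ℝ) = ∫ _ in (0:ℝ)..1, (c+1) ^ r := by simp
    _ ≤ ∫ u in (0:ℝ)..1, ∫ v in (0:ℝ)..1, |u - v + c| ^ r := by
        apply intervalIntegral.integral_mono_on (by norm_num)
        · exact intervalIntegrable_const
        · have : Continuous fun u : ℝ => phiF r (u+c) - phiF r (u+c-1) := by
            exact ((phiF_cont hr).comp (continuous_id.add continuous_const)).sub
              ((phiF_cont hr).comp ((continuous_id.add continuous_const).sub continuous_const))
          simp_rw [inner_integral_eq hr c]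
          exact (this.congr (by intro x; ring_nf)).intervalIntegrable 0 1
        · exact key

lemma core_reindex (h : ℤ → ℝ) : ∀ M : ℕ,
    (∑ i ∈ Finset.range M, ∑ j ∈ Finset.range M,
      if i ≠ j then h ((i:ℤ) - (j:ℤ)) else 0)
    = ∑ k ∈ Finset.Ico 1 M, ((M - k : ℕ) : ℝ) * (h (k:ℤ) + h (-(k:ℤ))) := by
  intro M
  induction M with
  | zero => simp
  | succ M ih =>
    have h1 : ∀ i ∈ Finset.range M,
        (∑ j ∈ Finset.range (M+1), if i ≠ j then h ((i:ℤ) - (j:ℤ)) else 0)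
        = (∑ j ∈ Finset.range M, if i ≠ j then h ((i:ℤ) - (j:ℤ)) else 0)
          + h ((i:ℤ) - (M:ℤ)) := by
      intro i hi
      rw [Finset.sum_range_succ, if_pos (Nat.ne_of_lt (Finset.mem_range.1 hi))]
    have h2 : (∑ j ∈ Finset.range (M+1), if (M:ℕ) ≠ j then h ((M:ℤ) - (j:ℤ)) else 0)
        = ∑ j ∈ Finset.range M, h ((M:ℤ) - (j:ℤ)) := by
      rw [Finset.sum_range_succ, if_neg (by simp)]
      rw [add_zero]
      exact Finset.sum_congr rfl fun j hj =>
        if_pos (Nat.ne_of_gt (Finset.mem_range.1 hj))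
    rw [Finset.sum_range_succ, Finset.sum_congr rfl h1, Finset.sum_add_distrib, h2, ih]
    -- now: RHS(M) + ∑_{i<M} h(i-M) + ∑_{j<M} h(M-j) = RHS(M+1)
    have h3 : (∑ i ∈ Finset.range M, h ((i:ℤ) - (M:ℤ)))
        = ∑ k ∈ Finset.Ico 1 (M+1), h (-(k:ℤ)) := by
      rw [Finset.sum_Ico_eq_sum_range]
      simp only [Nat.add_sub_cancel]
      rw [← Finset.sum_range_reflect]
      refine Finset.sum_congr rfl fun j hj => ?_
      have hjM : j < M := Finset.mem_range.1 hj
      congr 1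
      omega
    have h4 : (∑ j ∈ Finset.range M, h ((M:ℤ) - (j:ℤ)))
        = ∑ k ∈ Finset.Ico 1 (M+1), h (k:ℤ) := by
      rw [Finset.sum_Ico_eq_sum_range]
      simp only [Nat.add_sub_cancel]
      rw [← Finset.sum_range_reflect]
      refine Finset.sum_congr rfl fun j hj => ?_
      have hjM : j < M := Finset.mem_range.1 hj
      congr 1
      omega
    rw [h3, h4]
    rcases Nat.eq_zero_or_pos M with hM | hM
    · subst hM; simp
    · have h5 : ∀ k ∈ Finset.Ico 1 M, ((M + 1 - k : ℕ) : ℝ) * (h (k:ℤ) + h (-(k:ℤ)))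
          = ((M - k : ℕ) : ℝ) * (h (k:ℤ) + h (-(k:ℤ))) + (h (k:ℤ) + h (-(k:ℤ))) := by
        intro k hk
        have hkM : k < M := (Finset.mem_Ico.1 hk).2
        rw [Nat.cast_sub (by omega), Nat.cast_sub (by omega)]
        push_cast
        ring
      have e1 : ∑ k ∈ Finset.Ico 1 (M+1), h (-(k:ℤ))
          = (∑ k ∈ Finset.Ico 1 M, h (-(k:ℤ))) + h (-(M:ℤ)) :=
        Finset.sum_Ico_succ_top (by omega) _
      have e2 : ∑ k ∈ Finset.Ico 1 (M+1), h (k:ℤ)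
          = (∑ k ∈ Finset.Ico 1 M, h (k:ℤ)) + h (M:ℤ) :=
        Finset.sum_Ico_succ_top (by omega) _
      have e3 : ∑ k ∈ Finset.Ico 1 (M+1), ((M + 1 - k : ℕ) : ℝ) * (h (k:ℤ) + h (-(k:ℤ)))
          = (∑ k ∈ Finset.Ico 1 M, ((M + 1 - k : ℕ) : ℝ) * (h (k:ℤ) + h (-(k:ℤ))))
            + ((M + 1 - M : ℕ) : ℝ) * (h (M:ℤ) + h (-(M:ℤ))) :=
        Finset.sum_Ico_succ_top (by omega) _
      rw [e1, e2, e3, Finset.sum_congr rfl h5, Finset.sum_add_distrib,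
        show M + 1 - M = 1 by omega, Finset.sum_add_distrib]
      push_cast
      ring

lemma offdiag_reindex (h : ℤ → ℝ) (ℓ N : ℕ) :
    (∑ i ∈ Finset.Ico ℓ N, ∑ j ∈ Finset.Ico ℓ N,
      if i ≠ j then h ((i:ℤ) - (j:ℤ)) else 0)
    = ∑ k ∈ Finset.Ico 1 (N - ℓ), ((N - ℓ - k : ℕ) : ℝ) * (h (k:ℤ) + h (-(k:ℤ))) := by
  rw [Finset.sum_Ico_eq_sum_range]
  have h1 : ∀ i ∈ Finset.range (N - ℓ),
      (∑ j ∈ Finset.Ico ℓ N, if ℓ + i ≠ j then h ((ℓ + i : ℕ) - (j:ℤ)) else 0)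
      = ∑ j ∈ Finset.range (N - ℓ), (if i ≠ j then h ((i:ℤ) - (j:ℤ)) else 0) := by
    intro i _
    rw [Finset.sum_Ico_eq_sum_range]
    refine Finset.sum_congr rfl fun j _ => ?_
    refine if_congr (by simp) ?_ rfl
    congr 1
    push_cast
    ring
  rw [Finset.sum_congr rfl h1, core_reindex]

lemma ae_ne_real (c : ℝ) : ∀ᵐ t : ℝ, t ≠ c := by
  have h : {t : ℝ | ¬ t ≠ c} = {c} := by ext t; simp
  rw [ae_iff, h]
  exact Real.volume_singleton

lemma g_intable {β : ℝ} (hβ1 : -1 < β) (c M a b : ℝ) (ha : 0 ≤ a + c) (hab : a ≤ b) :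
    IntervalIntegrable (fun t : ℝ => (M - t)*((t+c)^β)) volume a b := by
  have hint1 : IntervalIntegrable (fun t : ℝ => (t+c)^β) volume a b := by
    have := (intervalIntegrable_rpow' (a := a+c) (b := b+c) hβ1).comp_add_right c
    simpa using this
  have hint2 : IntervalIntegrable (fun t : ℝ => (t+c)^(β+1)) volume a b := by
    have := (intervalIntegrable_rpow' (a := a+c) (b := b+c)
      (by linarith : (-1:ℝ) < β+1)).comp_add_right c
    simpa using this
  have base := (hint1.const_mul (M+c)).sub hint2
  rw [intervalIntegrable_iff] at base ⊢
  refine base.congr_fun ?_ measurableSet_uIoc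
  intro t ht
  rw [Set.uIoc_of_le hab] at ht
  have htc : 0 ≤ t + c := by linarith [ht.1]
  show (M+c)*(t+c)^β - (t+c)^(β+1) = (M - t)*((t+c)^β)
  rcases eq_or_lt_of_le htc with h | h
  · have ht' : t = -c := by linarith
    have h2 : t + c = 0 := h.symm
    rw [h2, Real.zero_rpow (by linarith : β+1 ≠ 0), ht']
    ring
  · rw [Real.rpow_add_one h.ne']; ring

lemma g_integral {β : ℝ} (hβ1 : -1 < β) (c M a b : ℝ) (ha : 0 ≤ a + c) (hab : a ≤ b) :
    ∫ t in a..b, (M - t)*((t+c)^β)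
    = (M+c)*((b+c)^(β+1) - (a+c)^(β+1))/(β+1) - ((b+c)^(β+2) - (a+c)^(β+2))/(β+2) := by
  have hint1 : IntervalIntegrable (fun t : ℝ => (t+c)^β) volume a b := by
    have := (intervalIntegrable_rpow' (a := a+c) (b := b+c) hβ1).comp_add_right c
    simpa using this
  have hint2 : IntervalIntegrable (fun t : ℝ => (t+c)^(β+1)) volume a b := by
    have := (intervalIntegrable_rpow' (a := a+c) (b := b+c)
      (by linarith : (-1:ℝ) < β+1)).comp_add_right c
    simpa using this
  have hcong : ∀ t ∈ Set.uIcc a b, (M - t)*((t+c)^β) = (M+c)*(t+c)^β - (t+c)^(β+1) := by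
    intro t ht
    rw [Set.uIcc_of_le hab] at ht
    have htc : 0 ≤ t + c := by linarith [ht.1]
    rcases eq_or_lt_of_le htc with h | h
    · have ht' : t = -c := by linarith
      have h2 : t + c = 0 := h.symm
      rw [h2, Real.zero_rpow (by linarith : β+1 ≠ 0), ht']
      ring
    · rw [Real.rpow_add_one h.ne']; ring
  rw [show (∫ t in a..b, (M - t)*((t+c)^β))
      = ∫ t in a..b, ((M+c)*(t+c)^β - (t+c)^(β+1)) from intervalIntegral.integral_congr hcong]
  rw [intervalIntegral.integral_sub (hint1.const_mul _) hint2,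
    intervalIntegral.integral_const_mul]
  have i1 : ∫ t in a..b, (t+c)^β = ((b+c)^(β+1) - (a+c)^(β+1))/(β+1) := by
    rw [intervalIntegral.integral_comp_add_right (fun y => y ^ β), integral_rpow (Or.inl hβ1)]
  have i2 : ∫ t in a..b, (t+c)^(β+1) = ((b+c)^(β+2) - (a+c)^(β+2))/(β+2) := by
    rw [intervalIntegral.integral_comp_add_right (fun y => y ^ (β+1)),
      integral_rpow (Or.inl (by linarith : (-1:ℝ) < β+1)), show β+1+1 = β+2 by ring]
  rw [i1, i2]
  ring

lemma Flim {β : ℝ} (hβ1 : -1 < β) (hβ0 : β < 0) (c e K1 K2 : ℝ) :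
    Tendsto (fun M : ℕ =>
      (((M:ℝ)+c)*((((M:ℝ)+e)+c)^(β+1) - K1)/(β+1)
        - ((((M:ℝ)+e)+c)^(β+2) - K2)/(β+2)) / (M:ℝ)^(β+2))
      atTop (𝓝 (1/((β+1)*(β+2)))) := by
  have hb1 : (0:ℝ) < β+1 := by linarith
  have hb2 : (0:ℝ) < β+2 := by linarith
  set d : ℝ := e + c with hd
  have hM : Tendsto (fun M : ℕ => (M:ℝ)) atTop atTop := tendsto_natCast_atTop_atTop
  have t1 : ∀ a : ℝ, Tendsto (fun M : ℕ => ((M:ℝ)+a)/(M:ℝ)) atTop (𝓝 1) := by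
    intro a
    have h0 : Tendsto (fun M : ℕ => 1 + a * ((M:ℝ))⁻¹) atTop (𝓝 (1 + a * 0)) :=
      tendsto_const_nhds.add (tendsto_const_nhds.mul hM.inv_tendsto_atTop)
    rw [mul_zero, add_zero] at h0
    apply h0.congr'
    filter_upwards [eventually_ge_atTop 1] with M hM1
    have hM0 : (0:ℝ) < (M:ℝ) := by exact_mod_cast Nat.pos_of_ne_zero (by omega)
    have hM0' : (M:ℝ) ≠ 0 := hM0.ne'
    field_simp
  have t2 : ∀ q : ℝ, 0 ≤ q → Tendsto (fun M : ℕ => (((M:ℝ)+d)/(M:ℝ)) ^ q) atTop (𝓝 1) := by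
    intro q hq
    have := (t1 d).rpow_const (Or.inr hq)
    rwa [Real.one_rpow] at this
  have t3 : Tendsto (fun M : ℕ => (M:ℝ) ^ (-(β+1))) atTop (𝓝 0) :=
    (tendsto_rpow_neg_atTop hb1).comp hM
  have t4 : Tendsto (fun M : ℕ => (M:ℝ) ^ (-(β+2))) atTop (𝓝 0) :=
    (tendsto_rpow_neg_atTop hb2).comp hM
  have tE : Tendsto (fun M : ℕ =>
      (1/(β+1)) * ((((M:ℝ)+c)/(M:ℝ)) * ((((M:ℝ)+d)/(M:ℝ)) ^ (β+1)))
      - (K1/(β+1)) * ((((M:ℝ)+c)/(M:ℝ)) * (M:ℝ)^(-(β+1)))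
      - (1/(β+2)) * ((((M:ℝ)+d)/(M:ℝ)) ^ (β+2))
      + (K2/(β+2)) * (M:ℝ)^(-(β+2))) atTop
      (𝓝 ((1/(β+1)) * (1 * 1) - (K1/(β+1)) * (1 * 0) - (1/(β+2)) * 1 + (K2/(β+2)) * 0)) :=
    (((tendsto_const_nhds.mul ((t1 c).mul (t2 (β+1) hb1.le))).sub
      (tendsto_const_nhds.mul ((t1 c).mul t3))).sub
      (tendsto_const_nhds.mul (t2 (β+2) hb2.le))).add (tendsto_const_nhds.mul t4)
  have hval : (1/(β+1)) * (1*1) - (K1/(β+1)) * (1 * 0) - (1/(β+2)) * 1 + (K2/(β+2)) * 0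
      = 1/((β+1)*(β+2)) := by field_simp; ring
  rw [hval] at tE
  apply tE.congr'
  obtain ⟨N₀, hN₀⟩ := exists_nat_gt (max 1 (max (-c) (-d)))
  filter_upwards [eventually_ge_atTop N₀] with M hMN
  have hxN : (N₀:ℝ) ≤ (M:ℝ) := by exact_mod_cast hMN
  have hx0 : (0:ℝ) < (M:ℝ) := by
    have := le_max_left (1:ℝ) (max (-c) (-d)); linarith
  have hxd : (0:ℝ) < (M:ℝ) + d := by
    have h2 := le_max_right (-c) (-d)
    have h3 := le_max_left (-d) (-c)
    have h4 := le_max_right (1:ℝ) (max (-c) (-d))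
    have h5 : -d ≤ max (-c) (-d) := le_max_right _ _
    linarith
  set x : ℝ := (M:ℝ) with hxdef
  have hde : x + e + c = x + d := by rw [hd]; ring
  rw [hde]
  have hb1' : (β+1) ≠ 0 := hb1.ne'
  have hb2' : (β+2) ≠ 0 := hb2.ne'
  have e1 : (x+d)^(β+2) = (x+d)^(β+1)*(x+d) := by
    rw [show β+2 = (β+1)+1 by ring, Real.rpow_add_one hxd.ne']
  have e2a : ((x+d)/x)^(β+1) = (x+d)^(β+1)/x^(β+1) := Real.div_rpow hxd.le hx0.le _
  have e2b : ((x+d)/x)^(β+2) = (x+d)^(β+2)/x^(β+2) := Real.div_rpow hxd.le hx0.le _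
  have e3 : x^(-(β+1)) = (x^(β+1))⁻¹ := Real.rpow_neg hx0.le _
  have e35 : x^(-(β+2)) = (x^(β+2))⁻¹ := Real.rpow_neg hx0.le _
  have e4 : x^(β+2) = x^(β+1)*x := by
    rw [show β+2 = (β+1)+1 by ring, Real.rpow_add_one hx0.ne']
  have hxb1 : x^(β+1) ≠ 0 := (Real.rpow_pos_of_pos hx0 _).ne'
  rw [e2a, e2b, e1, e3, e35, e4]
  field_simp
  ring

lemma term_le_int {β : ℝ} (hβ1 : -1 < β) (hβ0 : β < 0) {c : ℝ} {s k M : ℕ}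
    (hs : 1 ≤ (s:ℝ) + c) (hk : s ≤ k) (hkM : k < M) :
    ∫ t in (k:ℝ)..((k:ℝ)+1), ((M:ℝ) - t)*((t+c)^β) ≤ ((M - k : ℕ):ℝ) * ((k:ℝ)+c)^β := by
  have hsk : (s:ℝ) ≤ (k:ℝ) := by exact_mod_cast hk
  have hkc : (1:ℝ) ≤ (k:ℝ) + c := by linarith
  have hMk : ((M - k : ℕ):ℝ) = (M:ℝ) - (k:ℝ) := by
    rw [Nat.cast_sub hkM.le]
  have hkM' : (k:ℝ) + 1 ≤ (M:ℝ) := by exact_mod_cast hkM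
  rw [hMk]
  calc ∫ t in (k:ℝ)..((k:ℝ)+1), ((M:ℝ) - t)*((t+c)^β)
      ≤ ∫ _ in (k:ℝ)..((k:ℝ)+1), ((M:ℝ) - (k:ℝ))*(((k:ℝ)+c)^β) := by
        apply intervalIntegral.integral_mono_on (by linarith)
        · exact g_intable hβ1 c _ _ _ (by linarith) (by linarith)
        · exact intervalIntegrable_const
        · intro t ht
          have h1 : (0:ℝ) < t + c := by linarith [ht.1]
          exact mul_le_mul (by linarith [ht.1])
            (Real.rpow_le_rpow_of_nonpos (by linarith) (by linarith [ht.1]) hβ0.le)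
            (Real.rpow_nonneg h1.le _) (by linarith)
    _ = ((M:ℝ) - (k:ℝ))*(((k:ℝ)+c)^β) := by simp

lemma int_le_term {β : ℝ} (hβ1 : -1 < β) (hβ0 : β < 0) {c : ℝ} {s k M : ℕ}
    (hs : 1 ≤ (s:ℝ) + c) (hk : s ≤ k) (hkM : k < M) :
    ((M - k : ℕ):ℝ) * ((k:ℝ)+c)^β ≤ ∫ t in ((k:ℝ)-1)..(k:ℝ), ((M:ℝ) - t)*((t+c)^β) := by
  have hsk : (s:ℝ) ≤ (k:ℝ) := by exact_mod_cast hk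
  have hkc : (1:ℝ) ≤ (k:ℝ) + c := by linarith
  have hMk : ((M - k : ℕ):ℝ) = (M:ℝ) - (k:ℝ) := by
    rw [Nat.cast_sub hkM.le]
  have hkM' : (k:ℝ) + 1 ≤ (M:ℝ) := by exact_mod_cast hkM
  rw [hMk]
  calc ((M:ℝ) - (k:ℝ))*(((k:ℝ)+c)^β)
      = ∫ _ in ((k:ℝ)-1)..(k:ℝ), ((M:ℝ) - (k:ℝ))*(((k:ℝ)+c)^β) := by simp
    _ ≤ ∫ t in ((k:ℝ)-1)..(k:ℝ), ((M:ℝ) - t)*((t+c)^β) := by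
        apply intervalIntegral.integral_mono_ae_restrict (by linarith)
          intervalIntegrable_const (g_intable hβ1 c _ _ _ (by linarith) (by linarith))
        filter_upwards [(ae_ne_real (-c)).filter_mono (ae_mono Measure.restrict_le_self),
          ae_restrict_mem measurableSet_Icc] with t htne hmem
        have h0 : 0 ≤ t + c := by linarith [hmem.1]
        have h1 : (0:ℝ) < t + c :=
          lt_of_le_of_ne h0 (fun h => htne (by linarith))
        exact mul_le_mul (by linarith [hmem.2])
          (Real.rpow_le_rpow_of_nonpos h1 (by linarith [hmem.2]) hβ0.le)
          (Real.rpow_nonneg (by linarith) _) (by linarith [hmem.2])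

lemma sum_ge_int {β : ℝ} (hβ1 : -1 < β) (hβ0 : β < 0) {c : ℝ} {s M : ℕ}
    (hs : 1 ≤ (s:ℝ) + c) (hsM : s ≤ M) :
    ∫ t in (s:ℝ)..(M:ℝ), ((M:ℝ) - t)*((t+c)^β)
    ≤ ∑ k ∈ Finset.Ico s M, ((M - k : ℕ):ℝ) * ((k:ℝ)+c)^β := by
  have hint : ∀ k ∈ Set.Ico s M,
      IntervalIntegrable (fun t : ℝ => ((M:ℝ) - t)*((t+c)^β)) volume
        ((k:ℝ)) (((k+1:ℕ):ℝ)) := by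
    intro k hk
    obtain ⟨hk1, hk2⟩ := hk
    have hsk : (s:ℝ) ≤ (k:ℝ) := by exact_mod_cast hk1
    exact g_intable hβ1 c _ _ _ (by linarith) (by push_cast; linarith)
  rw [← intervalIntegral.sum_integral_adjacent_intervals_Ico (a := fun k : ℕ => (k:ℝ)) hsM hint]
  apply Finset.sum_le_sum
  intro k hk
  obtain ⟨hk1, hk2⟩ := Finset.mem_Ico.1 hk
  have hc : ((k+1:ℕ):ℝ) = (k:ℝ)+1 := by push_cast; ring
  calc ∫ t in ((k:ℕ):ℝ)..((k+1:ℕ):ℝ), ((M:ℝ) - t)*((t+c)^β)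
      = ∫ t in (k:ℝ)..((k:ℝ)+1), ((M:ℝ) - t)*((t+c)^β) := by rw [hc]
    _ ≤ ((M - k : ℕ):ℝ) * ((k:ℝ)+c)^β := term_le_int hβ1 hβ0 hs hk1 hk2

lemma sum_le_int {β : ℝ} (hβ1 : -1 < β) (hβ0 : β < 0) {c : ℝ} {s M : ℕ}
    (hs : 1 ≤ (s:ℝ) + c) (hsM : s ≤ M) :
    (∑ k ∈ Finset.Ico s M, ((M - k : ℕ):ℝ) * ((k:ℝ)+c)^β)
    ≤ ∫ t in ((s:ℝ)-1)..(M:ℝ), ((M:ℝ) - t)*((t+c)^β) := by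
  have hsM' : (s:ℝ) ≤ (M:ℝ) := by exact_mod_cast hsM
  have hint : ∀ k ∈ Set.Ico s M,
      IntervalIntegrable (fun t : ℝ => ((M:ℝ) - t)*((t+c)^β)) volume
        ((k:ℝ)-1) (((k+1:ℕ):ℝ)-1) := by
    intro k hk
    obtain ⟨hk1, hk2⟩ := hk
    have hsk : (s:ℝ) ≤ (k:ℝ) := by exact_mod_cast hk1
    exact g_intable hβ1 c _ _ _ (by linarith) (by push_cast; linarith)
  have hadj := intervalIntegral.sum_integral_adjacent_intervals_Ico
    (a := fun k : ℕ => (k:ℝ)-1) hsM hint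
  have step1 : (∑ k ∈ Finset.Ico s M, ((M - k : ℕ):ℝ) * ((k:ℝ)+c)^β)
      ≤ ∫ t in ((s:ℝ)-1)..((M:ℝ)-1), ((M:ℝ) - t)*((t+c)^β) := by
    rw [← hadj]
    apply Finset.sum_le_sum
    intro k hk
    obtain ⟨hk1, hk2⟩ := Finset.mem_Ico.1 hk
    have hc : ((k+1:ℕ):ℝ)-1 = (k:ℝ) := by push_cast; ring
    calc ((M - k : ℕ):ℝ) * ((k:ℝ)+c)^β
        ≤ ∫ t in ((k:ℝ)-1)..(k:ℝ), ((M:ℝ) - t)*((t+c)^β) := int_le_term hβ1 hβ0 hs hk1 hk2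
      _ = ∫ t in (((k:ℕ):ℝ)-1)..((((k+1:ℕ)):ℝ)-1), ((M:ℝ) - t)*((t+c)^β) := by rw [hc]
  have step2 : ∫ t in ((s:ℝ)-1)..((M:ℝ)-1), ((M:ℝ) - t)*((t+c)^β)
      ≤ ∫ t in ((s:ℝ)-1)..(M:ℝ), ((M:ℝ) - t)*((t+c)^β) := by
    have i1 := g_intable (M := (M:ℝ)) hβ1 c ((s:ℝ)-1) ((M:ℝ)-1) (by linarith) (by linarith)
    have i2 := g_intable (M := (M:ℝ)) hβ1 c ((M:ℝ)-1) ((M:ℝ)) (by linarith) (by linarith)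
    rw [← intervalIntegral.integral_add_adjacent_intervals i1 i2]
    have : 0 ≤ ∫ t in ((M:ℝ)-1)..(M:ℝ), ((M:ℝ) - t)*((t+c)^β) := by
      apply intervalIntegral.integral_nonneg (by linarith)
      intro t ht
      exact mul_nonneg (by linarith [ht.2]) (Real.rpow_nonneg (by linarith [ht.1]) _)
    linarith
  linarith

lemma Plim {β : ℝ} (hβ1 : -1 < β) (hβ0 : β < 0) (c : ℝ) (s : ℕ) (hs : 1 ≤ (s:ℝ) + c) :
    Tendsto (fun M : ℕ =>
      (∑ k ∈ Finset.Ico s M, ((M - k : ℕ):ℝ) * ((k:ℝ)+c)^β) / (M:ℝ)^(β+2))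
      atTop (𝓝 (1/((β+1)*(β+2)))) := by
  have lowlim := Flim hβ1 hβ0 c 0 (((s:ℝ)+c)^(β+1)) (((s:ℝ)+c)^(β+2))
  have uplim := Flim hβ1 hβ0 c 0 (((s:ℝ)-1+c)^(β+1)) (((s:ℝ)-1+c)^(β+2))
  refine tendsto_of_tendsto_of_tendsto_of_le_of_le' lowlim uplim ?_ ?_
  · filter_upwards [eventually_ge_atTop (s+1)] with M hM
    have hsM : s ≤ M := by omega
    have hM0 : (0:ℝ) < (M:ℝ) := by
      have : (0:ℕ) < M := by omega
      exact_mod_cast this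
    have hsM' : (s:ℝ) ≤ (M:ℝ) := by exact_mod_cast hsM
    have hMpos : (0:ℝ) ≤ (M:ℝ)^(β+2) := (Real.rpow_pos_of_pos hM0 _).le
    have hnum : ((M:ℝ)+c)*((((M:ℝ)+0)+c)^(β+1) - ((s:ℝ)+c)^(β+1))/(β+1)
        - ((((M:ℝ)+0)+c)^(β+2) - ((s:ℝ)+c)^(β+2))/(β+2)
        ≤ ∑ k ∈ Finset.Ico s M, ((M - k : ℕ):ℝ) * ((k:ℝ)+c)^β := by
      have hint := g_integral hβ1 c (M:ℝ) (s:ℝ) (M:ℝ) (by linarith) hsM'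
      rw [show (M:ℝ)+0+c = (M:ℝ)+c by ring, ← hint]
      exact sum_ge_int hβ1 hβ0 hs hsM
    exact div_le_div_of_nonneg_right hnum hMpos
  · filter_upwards [eventually_ge_atTop (s+1)] with M hM
    have hsM : s ≤ M := by omega
    have hM0 : (0:ℝ) < (M:ℝ) := by
      have : (0:ℕ) < M := by omega
      exact_mod_cast this
    have hsM' : (s:ℝ) ≤ (M:ℝ) := by exact_mod_cast hsM
    have hMpos : (0:ℝ) ≤ (M:ℝ)^(β+2) := (Real.rpow_pos_of_pos hM0 _).le
    have hnum : (∑ k ∈ Finset.Ico s M, ((M - k : ℕ):ℝ) * ((k:ℝ)+c)^β)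
        ≤ ((M:ℝ)+c)*((((M:ℝ)+0)+c)^(β+1) - ((s:ℝ)-1+c)^(β+1))/(β+1)
          - ((((M:ℝ)+0)+c)^(β+2) - ((s:ℝ)-1+c)^(β+2))/(β+2) := by
      have hint := g_integral hβ1 c (M:ℝ) ((s:ℝ)-1) (M:ℝ) (by linarith) (by linarith)
      rw [show ((s:ℝ)-1)+c = (s:ℝ)-1+c by ring] at hint
      rw [show (M:ℝ)+0+c = (M:ℝ)+c by ring, ← hint]
      exact sum_le_int hβ1 hβ0 hs hsM
    exact div_le_div_of_nonneg_right hnum hMpos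

lemma MoverN (ℓ : ℕ) : Tendsto (fun N : ℕ => (((N - ℓ:ℕ)):ℝ)/(N:ℝ)) atTop (𝓝 1) := by
  have hM : Tendsto (fun N : ℕ => (N:ℝ)) atTop atTop := tendsto_natCast_atTop_atTop
  have h0 : Tendsto (fun N : ℕ => 1 - (ℓ:ℝ) * ((N:ℝ))⁻¹) atTop (𝓝 (1 - (ℓ:ℝ) * 0)) :=
    tendsto_const_nhds.sub (tendsto_const_nhds.mul hM.inv_tendsto_atTop)
  rw [mul_zero, sub_zero] at h0
  apply h0.congr'
  filter_upwards [eventually_ge_atTop (ℓ+1)] with N hN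
  have hN0 : (0:ℝ) < (N:ℝ) := by
    have : (0:ℕ) < N := by omega
    exact_mod_cast this
  have hc : ((N - ℓ:ℕ):ℝ) = (N:ℝ) - (ℓ:ℝ) := by
    rw [Nat.cast_sub (by omega)]
  rw [hc]
  field_simp

lemma NoverM (ℓ : ℕ) : Tendsto (fun N : ℕ => (N:ℝ)/(((N - ℓ:ℕ)):ℝ)) atTop (𝓝 1) := by
  have h := (MoverN ℓ).inv₀ one_ne_zero
  rw [inv_one] at h
  apply h.congr
  intro N
  rw [← one_div, one_div_div]

/-- With `H ∈ (1/2,1)`, `H' = (H+1)/2` and offsets `q₁,r₁,q₂,r₂ ≤ ℓ`,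
the normalized off-diagonal double sum of the four-fold integrals
`A_N(i,j) = ∫_{[0,1]^4} |u-u'+i-j-q₁+q₂|^{2H'-2} |v-v'+i-j-r₁+r₂|^{2H'-2}`
satisfies `N^{2-2H} (N-ℓ)^{-2} ∑_{i≠j} A_N(i,j) → 1/(H(2H-1))`. -/
theorem offdiagonal_riemann_limit (H : ℝ) (hH : H ∈ Set.Ioo (1/2 : ℝ) 1)
    (H' : ℝ) (hH' : H' = (H + 1) / 2)
    (ℓ : ℕ) (q₁ r₁ q₂ r₂ : ℕ)
    (hq₁ : q₁ ≤ ℓ) (hr₁ : r₁ ≤ ℓ) (hq₂ : q₂ ≤ ℓ) (hr₂ : r₂ ≤ ℓ) :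
    Tendsto (fun N : ℕ =>
      ((N : ℝ) ^ (2 - 2 * H) / ((N : ℝ) - (ℓ : ℝ)) ^ 2) *
        ∑ i ∈ Finset.Ico ℓ N, ∑ j ∈ Finset.Ico ℓ N,
          if i ≠ j then
            ∫ u in (0:ℝ)..1, ∫ v in (0:ℝ)..1, ∫ u' in (0:ℝ)..1, ∫ v' in (0:ℝ)..1,
              |u - u' + (i : ℝ) - (j : ℝ) - (q₁ : ℝ) + (q₂ : ℝ)| ^ (2 * H' - 2) *
              |v - v' + (i : ℝ) - (j : ℝ) - (r₁ : ℝ) + (r₂ : ℝ)| ^ (2 * H' - 2)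
          else 0)
      atTop (nhds (1 / (H * (2 * H - 1)))) := by
  obtain ⟨hH1, hH2⟩ := hH
  have hH1' : (1:ℝ)/2 < H := hH1
  set r : ℝ := H - 1 with hrdef
  have hr1 : -1 < r := by rw [hrdef]; linarith
  have hr0 : r < 0 := by rw [hrdef]; linarith
  set β : ℝ := 2*H - 2 with hβdef
  have hβ1 : -1 < β := by rw [hβdef]; linarith
  have hβ0 : β < 0 := by rw [hβdef]; linarith
  have hβr : β = r + r := by rw [hβdef, hrdef]; ring
  have hexp : 2 * H' - 2 = r := by rw [hH', hrdef]; ring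
  set A : ℝ := (q₁:ℝ) - (q₂:ℝ) with hA
  set B : ℝ := (r₁:ℝ) - (r₂:ℝ) with hB
  have hq₁' : (q₁:ℝ) ≤ (ℓ:ℝ) := by exact_mod_cast hq₁
  have hq₂' : (q₂:ℝ) ≤ (ℓ:ℝ) := by exact_mod_cast hq₂
  have hr₁' : (r₁:ℝ) ≤ (ℓ:ℝ) := by exact_mod_cast hr₁
  have hr₂' : (r₂:ℝ) ≤ (ℓ:ℝ) := by exact_mod_cast hr₂
  have hA1 : -(ℓ:ℝ) ≤ A := by rw [hA]; linarith [Nat.cast_nonneg (α := ℝ) q₁]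
  have hA2 : A ≤ (ℓ:ℝ) := by rw [hA]; linarith [Nat.cast_nonneg (α := ℝ) q₂]
  have hB1 : -(ℓ:ℝ) ≤ B := by rw [hB]; linarith [Nat.cast_nonneg (α := ℝ) r₁]
  have hB2 : B ≤ (ℓ:ℝ) := by rw [hB]; linarith [Nat.cast_nonneg (α := ℝ) r₂]
  set h : ℤ → ℝ := fun z => Gf r ((z:ℝ) - A) * Gf r ((z:ℝ) - B) with hh
  set w : ℕ → ℝ := fun k => h (k:ℤ) + h (-(k:ℤ)) with hw
  -- basic facts about w
  have w_nonneg : ∀ k : ℕ, 0 ≤ w k := by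
    intro k
    rw [hw, hh]
    have g1 := Gf_nonneg hr1 hr0
    exact add_nonneg (mul_nonneg (g1 _) (g1 _)) (mul_nonneg (g1 _) (g1 _))
  have hfac_up : ∀ x e : ℝ, -(ℓ:ℝ) ≤ e → e ≤ (ℓ:ℝ) → (ℓ:ℝ)+2 ≤ x →
      Gf r (x - e) ≤ (x - ((ℓ:ℝ)+1))^r := by
    intro x e he1 he2 hx
    have h2 : 2 ≤ x - e := by linarith
    calc Gf r (x - e) ≤ (x - e - 1)^r := Gf_le hr1 hr0 h2
      _ ≤ (x - ((ℓ:ℝ)+1))^r :=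
        Real.rpow_le_rpow_of_nonpos (by linarith) (by linarith) hr0.le
  have hfac_lo : ∀ x e : ℝ, -(ℓ:ℝ) ≤ e → e ≤ (ℓ:ℝ) → (ℓ:ℝ)+2 ≤ x →
      (x + ((ℓ:ℝ)+1))^r ≤ Gf r (x - e) := by
    intro x e he1 he2 hx
    have h2 : 2 ≤ x - e := by linarith
    calc (x + ((ℓ:ℝ)+1))^r ≤ (x - e + 1)^r :=
        Real.rpow_le_rpow_of_nonpos (by linarith) (by linarith) hr0.le
      _ ≤ Gf r (x - e) := Gf_ge hr1 hr0 h2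
  have hGf0 : ∀ c : ℝ, 0 ≤ Gf r c := Gf_nonneg hr1 hr0
  have wup : ∀ k : ℕ, ℓ+2 ≤ k → w k ≤ 2*((k:ℝ)-((ℓ:ℝ)+1))^β := by
    intro k hk
    have hxk : (ℓ:ℝ)+2 ≤ (k:ℝ) := by exact_mod_cast hk
    have e1 : h (k:ℤ) ≤ ((k:ℝ)-((ℓ:ℝ)+1))^r * ((k:ℝ)-((ℓ:ℝ)+1))^r := by
      rw [hh]
      push_cast
      exact mul_le_mul (hfac_up _ _ hA1 hA2 hxk) (hfac_up _ _ hB1 hB2 hxk)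
        (hGf0 _) (Real.rpow_nonneg (by linarith) _)
    have e2 : h (-(k:ℤ)) ≤ ((k:ℝ)-((ℓ:ℝ)+1))^r * ((k:ℝ)-((ℓ:ℝ)+1))^r := by
      rw [hh]
      push_cast
      rw [show -(k:ℝ) - A = -((k:ℝ) - (-A)) by ring, show -(k:ℝ) - B = -((k:ℝ) - (-B)) by ring,
        Gf_even, Gf_even]
      exact mul_le_mul (hfac_up _ _ (by linarith) (by linarith) hxk)
        (hfac_up _ _ (by linarith) (by linarith) hxk)
        (hGf0 _) (Real.rpow_nonneg (by linarith) _)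
    have e3 : ((k:ℝ)-((ℓ:ℝ)+1))^r * ((k:ℝ)-((ℓ:ℝ)+1))^r = ((k:ℝ)-((ℓ:ℝ)+1))^β := by
      rw [hβr, Real.rpow_add (by linarith : (0:ℝ) < (k:ℝ)-((ℓ:ℝ)+1))]
    have hwk : w k = h (k:ℤ) + h (-(k:ℤ)) := rfl
    rw [hwk]
    rw [e3] at e1 e2
    linarith
  have wlo : ∀ k : ℕ, ℓ+2 ≤ k → 2*((k:ℝ)+((ℓ:ℝ)+1))^β ≤ w k := by
    intro k hk
    have hxk : (ℓ:ℝ)+2 ≤ (k:ℝ) := by exact_mod_cast hk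
    have hkpos : (0:ℝ) < (k:ℝ)+((ℓ:ℝ)+1) := by linarith
    have e1 : ((k:ℝ)+((ℓ:ℝ)+1))^r * ((k:ℝ)+((ℓ:ℝ)+1))^r ≤ h (k:ℤ) := by
      rw [hh]
      push_cast
      exact mul_le_mul (hfac_lo _ _ hA1 hA2 hxk) (hfac_lo _ _ hB1 hB2 hxk)
        (Real.rpow_nonneg hkpos.le _) (hGf0 _)
    have e2 : ((k:ℝ)+((ℓ:ℝ)+1))^r * ((k:ℝ)+((ℓ:ℝ)+1))^r ≤ h (-(k:ℤ)) := by
      rw [hh]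
      push_cast
      rw [show -(k:ℝ) - A = -((k:ℝ) - (-A)) by ring, show -(k:ℝ) - B = -((k:ℝ) - (-B)) by ring,
        Gf_even, Gf_even]
      exact mul_le_mul (hfac_lo _ _ (by linarith) (by linarith) hxk)
        (hfac_lo _ _ (by linarith) (by linarith) hxk)
        (Real.rpow_nonneg hkpos.le _) (hGf0 _)
    have e3 : ((k:ℝ)+((ℓ:ℝ)+1))^r * ((k:ℝ)+((ℓ:ℝ)+1))^r = ((k:ℝ)+((ℓ:ℝ)+1))^β := by
      rw [hβr, Real.rpow_add hkpos]
    have hwk : w k = h (k:ℤ) + h (-(k:ℤ)) := rfl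
    rw [hwk]
    rw [e3] at e1 e2
    linarith
  -- limits
  have hMt : Tendsto (fun N : ℕ => N - ℓ) atTop atTop := tendsto_sub_atTop_nat ℓ
  have hplus := (Plim hβ1 hβ0 ((ℓ:ℝ)+1) (ℓ+2) (by push_cast; linarith [Nat.cast_nonneg (α := ℝ) ℓ])).comp hMt
  have hminus := (Plim hβ1 hβ0 (-((ℓ:ℝ)+1)) (ℓ+2) (by push_cast; linarith)).comp hMt
  have hRlim : Tendsto (fun N : ℕ => (((N-ℓ:ℕ):ℝ)/(N:ℝ))^β) atTop (𝓝 1) := by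
    have := (MoverN ℓ).rpow_const (p := β) (Or.inl one_ne_zero)
    rwa [Real.one_rpow] at this
  have hzero : Tendsto (fun N : ℕ => (N:ℝ)^(2-2*H)/((N-ℓ:ℕ):ℝ)) atTop (𝓝 0) := by
    have h1 : Tendsto (fun N : ℕ => (N:ℝ)^(-(2*H-1))) atTop (𝓝 0) :=
      (tendsto_rpow_neg_atTop (by linarith)).comp tendsto_natCast_atTop_atTop
    have h2 := h1.mul (NoverM ℓ)
    rw [zero_mul] at h2
    apply h2.congr'
    filter_upwards [eventually_ge_atTop (ℓ+1)] with N hN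
    have hN0 : (0:ℝ) < (N:ℝ) := by
      have : (0:ℕ) < N := by omega
      exact_mod_cast this
    rw [show (2-2*H) = (-(2*H-1)) + 1 by ring, Real.rpow_add_one hN0.ne']
    ring
  have hC : (0:ℝ) ≤ ∑ k ∈ Finset.Ico 1 (ℓ+2), w k :=
    Finset.sum_nonneg fun k _ => w_nonneg k
  have hLval : (∑ k ∈ Finset.Ico 1 (ℓ+2), w k) * 0 + 2 * (1/((β+1)*(β+2))) * 1
      = 1 / (H * (2 * H - 1)) := by
    rw [hβdef]
    have h1 : 2*H - 2 + 1 = 2*H - 1 := by ring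
    have h2 : 2*H - 2 + 2 = 2*H := by ring
    rw [h1, h2]
    have hne1 : 2*H - 1 ≠ 0 := by linarith
    have hne2 : H ≠ 0 := by linarith
    field_simp
    ring
  -- the reduced target
  have main : Tendsto (fun N : ℕ =>
      ((N:ℝ)^(2-2*H) / ((N:ℝ) - (ℓ:ℝ))^2) *
        ∑ k ∈ Finset.Ico 1 (N-ℓ), ((N-ℓ-k:ℕ):ℝ) * w k) atTop
      (𝓝 (1/(H*(2*H-1)))) := by
    have tlow : Tendsto (fun N : ℕ =>
        ((N:ℝ)^(2-2*H) / ((N:ℝ) - (ℓ:ℝ))^2) *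
          (2 * ∑ k ∈ Finset.Ico (ℓ+2) (N-ℓ), ((N-ℓ-k:ℕ):ℝ) * ((k:ℝ)+((ℓ:ℝ)+1))^β))
        atTop (𝓝 (1/(H*(2*H-1)))) := by
      have tprod := (hplus.const_mul 2).mul hRlim
      rw [show (2 * (1/((β+1)*(β+2))) * 1) = 1/(H*(2*H-1)) by
        rw [← hLval]; ring] at tprod
      apply tprod.congr'
      filter_upwards [eventually_ge_atTop (2*ℓ+4)] with N hN
      have hm0 : (0:ℝ) < ((N-ℓ:ℕ):ℝ) := by
        have : (0:ℕ) < N - ℓ := by omega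
        exact_mod_cast this
      have hn0 : (0:ℝ) < (N:ℝ) := by
        have : (0:ℕ) < N := by omega
        exact_mod_cast this
      have hcast : (N:ℝ) - (ℓ:ℝ) = ((N-ℓ:ℕ):ℝ) := by
        rw [Nat.cast_sub (by omega)]
      set m : ℝ := ((N-ℓ:ℕ):ℝ)
      set S : ℝ := ∑ k ∈ Finset.Ico (ℓ+2) (N-ℓ), ((N-ℓ-k:ℕ):ℝ) * ((k:ℝ)+((ℓ:ℝ)+1))^β
      show 2 * (S / m^(β+2)) * ((m/(N:ℝ))^β) = ((N:ℝ)^(2-2*H) / ((N:ℝ) - (ℓ:ℝ))^2) * (2*S)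
      rw [hcast]
      have hmβ : m^(β+2) = m^β * m^2 := by
        rw [show β+2 = β + ((2:ℕ):ℝ) by norm_num, Real.rpow_add hm0, Real.rpow_natCast]
      have hdiv : (m/(N:ℝ))^β = m^β/(N:ℝ)^β := Real.div_rpow hm0.le hn0.le _
      have hn2H : (N:ℝ)^(2-2*H) = ((N:ℝ)^β)⁻¹ := by
        rw [show 2-2*H = -β by rw [hβdef]; ring, Real.rpow_neg hn0.le]
      rw [hdiv, hmβ, hn2H]
      have hmβ0 : m^β ≠ 0 := (Real.rpow_pos_of_pos hm0 _).ne'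
      have hnβ0 : (N:ℝ)^β ≠ 0 := (Real.rpow_pos_of_pos hn0 _).ne'
      field_simp
    have tup : Tendsto (fun N : ℕ =>
        ((N:ℝ)^(2-2*H) / ((N:ℝ) - (ℓ:ℝ))^2) *
          ((∑ k ∈ Finset.Ico 1 (ℓ+2), w k) * ((N-ℓ:ℕ):ℝ)
            + 2 * ∑ k ∈ Finset.Ico (ℓ+2) (N-ℓ), ((N-ℓ-k:ℕ):ℝ) * ((k:ℝ) + -((ℓ:ℝ)+1))^β))
        atTop (𝓝 (1/(H*(2*H-1)))) := by
      have hCt : Tendsto (fun _ : ℕ => ∑ k ∈ Finset.Ico 1 (ℓ+2), w k) atTop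
          (𝓝 (∑ k ∈ Finset.Ico 1 (ℓ+2), w k)) := tendsto_const_nhds
      have tprod := (hCt.mul hzero).add ((hminus.const_mul 2).mul hRlim)
      rw [hLval] at tprod
      apply tprod.congr'
      filter_upwards [eventually_ge_atTop (2*ℓ+4)] with N hN
      have hm0 : (0:ℝ) < ((N-ℓ:ℕ):ℝ) := by
        have : (0:ℕ) < N - ℓ := by omega
        exact_mod_cast this
      have hn0 : (0:ℝ) < (N:ℝ) := by
        have : (0:ℕ) < N := by omega
        exact_mod_cast this
      have hcast : (N:ℝ) - (ℓ:ℝ) = ((N-ℓ:ℕ):ℝ) := by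
        rw [Nat.cast_sub (by omega)]
      set m : ℝ := ((N-ℓ:ℕ):ℝ)
      set S : ℝ := ∑ k ∈ Finset.Ico (ℓ+2) (N-ℓ), ((N-ℓ-k:ℕ):ℝ) * ((k:ℝ) + -((ℓ:ℝ)+1))^β
      set C : ℝ := ∑ k ∈ Finset.Ico 1 (ℓ+2), w k
      show C * ((N:ℝ)^(2-2*H)/m) + 2 * (S/m^(β+2)) * ((m/(N:ℝ))^β)
          = ((N:ℝ)^(2-2*H) / ((N:ℝ) - (ℓ:ℝ))^2) * (C * m + 2*S)
      rw [hcast]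
      have hmβ : m^(β+2) = m^β * m^2 := by
        rw [show β+2 = β + ((2:ℕ):ℝ) by norm_num, Real.rpow_add hm0, Real.rpow_natCast]
      have hdiv : (m/(N:ℝ))^β = m^β/(N:ℝ)^β := Real.div_rpow hm0.le hn0.le _
      have hn2H : (N:ℝ)^(2-2*H) = ((N:ℝ)^β)⁻¹ := by
        rw [show 2-2*H = -β by rw [hβdef]; ring, Real.rpow_neg hn0.le]
      rw [hdiv, hmβ, hn2H]
      have hmβ0 : m^β ≠ 0 := (Real.rpow_pos_of_pos hm0 _).ne'
      have hnβ0 : (N:ℝ)^β ≠ 0 := (Real.rpow_pos_of_pos hn0 _).ne'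
      field_simp
    refine tendsto_of_tendsto_of_tendsto_of_le_of_le' tlow tup ?_ ?_
    · filter_upwards [eventually_ge_atTop (2*ℓ+4)] with N hN
      have hn0 : (0:ℝ) ≤ (N:ℝ) := Nat.cast_nonneg _
      have hscale : 0 ≤ (N:ℝ)^(2-2*H)/((N:ℝ)-(ℓ:ℝ))^2 :=
        div_nonneg (Real.rpow_nonneg hn0 _) (sq_nonneg _)
      apply mul_le_mul_of_nonneg_left ?_ hscale
      have hsplit : ∑ k ∈ Finset.Ico 1 (N-ℓ), ((N-ℓ-k:ℕ):ℝ) * w k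
          = (∑ k ∈ Finset.Ico 1 (ℓ+2), ((N-ℓ-k:ℕ):ℝ) * w k)
            + ∑ k ∈ Finset.Ico (ℓ+2) (N-ℓ), ((N-ℓ-k:ℕ):ℝ) * w k :=
        (Finset.sum_Ico_consecutive _ (by omega) (by omega)).symm
      rw [hsplit]
      have hpre : 0 ≤ ∑ k ∈ Finset.Ico 1 (ℓ+2), ((N-ℓ-k:ℕ):ℝ) * w k :=
        Finset.sum_nonneg fun k _ => mul_nonneg (Nat.cast_nonneg _) (w_nonneg k)
      have hmain : 2 * (∑ k ∈ Finset.Ico (ℓ+2) (N-ℓ), ((N-ℓ-k:ℕ):ℝ) * ((k:ℝ)+((ℓ:ℝ)+1))^β)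
          ≤ ∑ k ∈ Finset.Ico (ℓ+2) (N-ℓ), ((N-ℓ-k:ℕ):ℝ) * w k := by
        rw [Finset.mul_sum]
        apply Finset.sum_le_sum
        intro k hk
        obtain ⟨hk1, hk2⟩ := Finset.mem_Ico.1 hk
        calc 2 * (((N-ℓ-k:ℕ):ℝ) * ((k:ℝ)+((ℓ:ℝ)+1))^β)
            = ((N-ℓ-k:ℕ):ℝ) * (2*((k:ℝ)+((ℓ:ℝ)+1))^β) := by ring
          _ ≤ ((N-ℓ-k:ℕ):ℝ) * w k :=
            mul_le_mul_of_nonneg_left (wlo k hk1) (Nat.cast_nonneg _)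
      linarith
    · filter_upwards [eventually_ge_atTop (2*ℓ+4)] with N hN
      have hn0 : (0:ℝ) ≤ (N:ℝ) := Nat.cast_nonneg _
      have hscale : 0 ≤ (N:ℝ)^(2-2*H)/((N:ℝ)-(ℓ:ℝ))^2 :=
        div_nonneg (Real.rpow_nonneg hn0 _) (sq_nonneg _)
      apply mul_le_mul_of_nonneg_left ?_ hscale
      have hsplit : ∑ k ∈ Finset.Ico 1 (N-ℓ), ((N-ℓ-k:ℕ):ℝ) * w k
          = (∑ k ∈ Finset.Ico 1 (ℓ+2), ((N-ℓ-k:ℕ):ℝ) * w k)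
            + ∑ k ∈ Finset.Ico (ℓ+2) (N-ℓ), ((N-ℓ-k:ℕ):ℝ) * w k :=
        (Finset.sum_Ico_consecutive _ (by omega) (by omega)).symm
      rw [hsplit]
      have hpre : (∑ k ∈ Finset.Ico 1 (ℓ+2), ((N-ℓ-k:ℕ):ℝ) * w k)
          ≤ (∑ k ∈ Finset.Ico 1 (ℓ+2), w k) * ((N-ℓ:ℕ):ℝ) := by
        rw [Finset.sum_mul]
        apply Finset.sum_le_sum
        intro k hk
        rw [mul_comm (w k) _]
        apply mul_le_mul_of_nonneg_right ?_ (w_nonneg k)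
        exact_mod_cast Nat.sub_le (N-ℓ) k
      have hmain : (∑ k ∈ Finset.Ico (ℓ+2) (N-ℓ), ((N-ℓ-k:ℕ):ℝ) * w k)
          ≤ 2 * ∑ k ∈ Finset.Ico (ℓ+2) (N-ℓ), ((N-ℓ-k:ℕ):ℝ) * ((k:ℝ) + -((ℓ:ℝ)+1))^β := by
        rw [Finset.mul_sum]
        apply Finset.sum_le_sum
        intro k hk
        obtain ⟨hk1, hk2⟩ := Finset.mem_Ico.1 hk
        have := wup k hk1
        calc ((N-ℓ-k:ℕ):ℝ) * w k
            ≤ ((N-ℓ-k:ℕ):ℝ) * (2*((k:ℝ)-((ℓ:ℝ)+1))^β) :=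
              mul_le_mul_of_nonneg_left (wup k hk1) (Nat.cast_nonneg _)
          _ = 2 * (((N-ℓ-k:ℕ):ℝ) * ((k:ℝ) + -((ℓ:ℝ)+1))^β) := by
              rw [sub_eq_add_neg]
              ring
      linarith
  -- transfer back to the original expression
  refine main.congr fun N => ?_
  congr 1
  have hwfun : ∀ k : ℕ, w k = h (k:ℤ) + h (-(k:ℤ)) := fun k => rfl
  simp only [hwfun]
  rw [← offdiag_reindex h ℓ N]
  refine Finset.sum_congr rfl fun i _ => Finset.sum_congr rfl fun j _ => ?_
  by_cases hij : i = j
  · simp [hij]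
  · rw [if_pos hij, if_pos hij, hexp]
    have e1 : ∀ u u' : ℝ, u - u' + (i:ℝ) - (j:ℝ) - (q₁:ℝ) + (q₂:ℝ)
        = u - u' + (((((i:ℤ) - (j:ℤ))) : ℝ) - A) := by
      intro u u'; rw [hA]; push_cast; ring
    have e2 : ∀ v v' : ℝ, v - v' + (i:ℝ) - (j:ℝ) - (r₁:ℝ) + (r₂:ℝ)
        = v - v' + (((((i:ℤ) - (j:ℤ))) : ℝ) - B) := by
      intro v v'; rw [hB]; push_cast; ring
    simp only [e1, e2]
    rw [quad_eq hr1 hr0]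
    simp only [hh]
    push_cast
    ring
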